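/- The number of acyclic orientations of the graph G = H(k, n_0, n_1, ..., n_{k-1}) is a(G) = k! · Π_{i=0}^{k-1} (i+1)^{n_i}. -/

import Mathlib

open SimpleGraph

def graphH (k : ℕ) (ns : ℕ → ℕ) :
    SimpleGraph (Fin k ⊕ Σ i : Fin k, Fin (ns i.val)) where
  Adj a b :=
    match a, b with
    | Sum.inl u, Sum.inl v => u ≠ v
    | Sum.inl u, Sum.inr p => u.val < p.1.val
    | Sum.inr p, Sum.inl u => u.val < p.1.val
    | Sum.inr _, Sum.inr _ => False
  symm := by
    constructor
    rintro (u | p) (v | q) h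
    · exact h.symm
    · exact h
    · exact h
    · exact h
  loopless := by
    constructor
    rintro (u | p) h
    · exact h rfl
    · exact h

/-- An orientation of a simple graph `G`: a relation `θ` on the vertices such that for adjacent
vertices exactly one of `θ a b`, `θ b a` holds, and for non-adjacent (or equal) vertices
neither holds. -/
def IsOrientation {V : Type*} (G : SimpleGraph V) (θ : V → V → Prop) : Prop :=
  ∀ a b : V, (G.Adj a b → (θ a b ↔ ¬ θ b a)) ∧ (¬ G.Adj a b → ¬ θ a b)

/-- A relation is acyclic if its digraph has no directed cycle, i.e. its transitive closure is
irreflexive. -/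
def RelAcyclic {V : Type*} (θ : V → V → Prop) : Prop :=
  ∀ v, ¬ Relation.TransGen θ v v

/-- `a(G)`, the number of acyclic orientations of `G`. -/
noncomputable def numAcyclicOrientations {V : Type*} (G : SimpleGraph V) : ℕ :=
  Nat.card {θ : V → V → Prop // IsOrientation G θ ∧ RelAcyclic θ}


open Finset

variable {k : ℕ}

def Nbr (i : Fin k) : Finset (Fin k) := Finset.univ.filter (fun w => w.val < i.val)

lemma card_Nbr (i : Fin k) : (Nbr i).card = i.val := by
  have h : Nbr i = Finset.Iio i := by
    ext w
    simp only [Nbr, mem_filter, mem_univ, true_and, Finset.mem_Iio]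
    exact Iff.rfl
  rw [h, Fin.card_Iio]

def rnk (ρ : Equiv.Perm (Fin k)) (i : Fin k) (u : Fin k) : ℕ :=
  ((Nbr i).filter (fun w => ρ w < ρ u)).card

lemma rnk_lt_rnk {ρ : Equiv.Perm (Fin k)} {i u w : Fin k}
    (hu : u.val < i.val) (hρ : ρ u < ρ w) : rnk ρ i u < rnk ρ i w := by
  apply Finset.card_lt_card
  rw [Finset.ssubset_iff_of_subset]
  · refine ⟨u, ?_, ?_⟩
    · simp only [Nbr, mem_filter, mem_univ, true_and]; exact ⟨hu, hρ⟩
    · simp only [Nbr, mem_filter, mem_univ, true_and, not_and, not_lt]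
      exact fun _ => le_refl _
  · intro x hx
    simp only [Nbr, mem_filter, mem_univ, true_and] at hx ⊢
    exact ⟨hx.1, hx.2.trans hρ⟩

lemma rnk_lt_iff {ρ : Equiv.Perm (Fin k)} {i u w : Fin k}
    (hu : u.val < i.val) (hw : w.val < i.val) : rnk ρ i u < rnk ρ i w ↔ ρ u < ρ w := by
  constructor
  · intro h
    rcases lt_trichotomy (ρ u) (ρ w) with h' | h' | h'
    · exact h'
    · exact absurd h (by rw [ρ.injective h']; exact lt_irrefl _)
    · exact absurd (rnk_lt_rnk hw h') (by omega)
  · exact rnk_lt_rnk hu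

lemma rnk_lt (ρ : Equiv.Perm (Fin k)) {i u : Fin k} (hu : u.val < i.val) :
    rnk ρ i u < i.val := by
  have hsub : (Nbr i).filter (fun w => ρ w < ρ u) ⊆ (Nbr i).erase u := by
    intro w hw
    simp only [Nbr, mem_filter, mem_univ, true_and] at hw
    refine Finset.mem_erase.mpr ⟨fun e => absurd (e ▸ hw.2) (lt_irrefl _), by simp only [Nbr, mem_filter, mem_univ, true_and]; exact hw.1⟩
  have := Finset.card_le_card hsub
  rw [Finset.card_erase_of_mem (by simp only [Nbr, mem_filter, mem_univ, true_and]; exact hu), card_Nbr] at this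
  unfold rnk
  omega

lemma rnk_injOn (ρ : Equiv.Perm (Fin k)) (i : Fin k) :
    Set.InjOn (rnk ρ i) (Nbr i : Set (Fin k)) := by
  intro u hu w hw h
  simp only [coe_filter, Set.mem_setOf_eq, Nbr, mem_coe, mem_filter, mem_univ, true_and] at hu hw
  by_contra hne
  rcases lt_or_gt_of_ne (fun e : ρ u = ρ w => hne (ρ.injective e)) with h' | h'
  · exact absurd (rnk_lt_rnk hu h') (by omega)
  · exact absurd (rnk_lt_rnk hw h') (by omega)

lemma image_rnk (ρ : Equiv.Perm (Fin k)) (i : Fin k) :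
    (Nbr i).image (rnk ρ i) = Finset.range i.val := by
  apply Finset.eq_of_subset_of_card_le
  · intro r hr
    simp only [mem_image] at hr
    obtain ⟨u, hu, rfl⟩ := hr
    simp only [Nbr, mem_filter, mem_univ, true_and] at hu
    simpa using rnk_lt ρ hu
  · rw [Finset.card_range, Finset.card_image_of_injOn (rnk_injOn ρ i), card_Nbr]

lemma card_filter_rnk_lt (ρ : Equiv.Perm (Fin k)) (i : Fin k) {t : ℕ} (ht : t ≤ i.val) :
    ((Nbr i).filter (fun u => rnk ρ i u < t)).card = t := by
  have h1 : ((Nbr i).filter (fun u => rnk ρ i u < t)).card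
      = (((Nbr i).filter (fun u => rnk ρ i u < t)).image (rnk ρ i)).card := by
    rw [Finset.card_image_of_injOn ((rnk_injOn ρ i).mono (by
      intro x hx; simpa [Nbr] using (Finset.filter_subset _ _ hx)))]
  rw [h1]
  have h2 : ((Nbr i).filter (fun u => rnk ρ i u < t)).image (rnk ρ i)
      = ((Nbr i).image (rnk ρ i)).filter (fun r => r < t) := by
    rw [Finset.filter_image]
  rw [h2, image_rnk]
  have h3 : (Finset.range i.val).filter (fun r => r < t) = Finset.range t := by
    ext x; simp only [mem_filter, mem_range]; omega
  rw [h3, Finset.card_range]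
open SimpleGraph

variable {ns : ℕ → ℕ}

def mkOr (ρ : Equiv.Perm (Fin k)) (t : ∀ i : Fin k, Fin (ns i.val) → Fin (i.val + 1)) :
    (Fin k ⊕ Σ i : Fin k, Fin (ns i.val)) → (Fin k ⊕ Σ i : Fin k, Fin (ns i.val)) → Prop
  | Sum.inl u, Sum.inl v => ρ u < ρ v
  | Sum.inl u, Sum.inr ⟨i, j⟩ => u.val < i.val ∧ rnk ρ i u < (t i j : ℕ)
  | Sum.inr ⟨i, j⟩, Sum.inl u => u.val < i.val ∧ (t i j : ℕ) ≤ rnk ρ i u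
  | Sum.inr _, Sum.inr _ => False

def Mx (ρ : Equiv.Perm (Fin k)) (i : Fin k) (t : ℕ) : ℕ :=
  (((Nbr i).filter (fun u => rnk ρ i u < t)).sup (fun u => (ρ u : ℕ) + 1))

def htf (ρ : Equiv.Perm (Fin k)) (t : ∀ i : Fin k, Fin (ns i.val) → Fin (i.val + 1)) :
    (Fin k ⊕ Σ i : Fin k, Fin (ns i.val)) → ℤ
  | Sum.inl u => 2 * ((ρ u : ℕ) : ℤ)
  | Sum.inr ⟨i, j⟩ => 2 * ((Mx ρ i (t i j) : ℕ) : ℤ) - 1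

lemma htf_lt (ρ : Equiv.Perm (Fin k)) (t : ∀ i : Fin k, Fin (ns i.val) → Fin (i.val + 1))
    {a b} (h : mkOr ρ t a b) : htf ρ t a < htf ρ t b := by
  rcases a with u | ⟨i, j⟩ <;> rcases b with v | ⟨i', j'⟩
  · have h' : (ρ u : ℕ) < (ρ v : ℕ) := h
    simp only [htf]; omega
  · obtain ⟨h1, h2⟩ := h
    have hle : (ρ u : ℕ) + 1 ≤ Mx ρ i' (t i' j') := by
      apply Finset.le_sup (f := fun u => (ρ u : ℕ) + 1)
      simp only [Nbr, Finset.mem_filter, Finset.mem_univ, true_and]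
      exact ⟨h1, h2⟩
    simp only [htf]; omega
  · obtain ⟨h1, h2⟩ := h
    have hle : Mx ρ i (t i j) ≤ (ρ v : ℕ) := by
      apply Finset.sup_le
      intro u hu
      simp only [Nbr, Finset.mem_filter, Finset.mem_univ, true_and] at hu
      have : ρ u < ρ v := (rnk_lt_iff hu.1 h1).mp (lt_of_lt_of_le hu.2 h2)
      exact this
    simp only [htf]; omega
  · exact h.elim

lemma mkOr_acyclic (ρ : Equiv.Perm (Fin k)) (t : ∀ i : Fin k, Fin (ns i.val) → Fin (i.val + 1)) :
    RelAcyclic (mkOr ρ t) := by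
  intro v hv
  have key : ∀ a b, Relation.TransGen (mkOr ρ t) a b → htf ρ t a < htf ρ t b := by
    intro a b h
    induction h with
    | single h => exact htf_lt ρ t h
    | tail _ h ih => exact ih.trans (htf_lt ρ t h)
  exact lt_irrefl _ (key v v hv)

lemma mkOr_orient (ρ : Equiv.Perm (Fin k)) (t : ∀ i : Fin k, Fin (ns i.val) → Fin (i.val + 1)) :
    IsOrientation (graphH k ns) (mkOr ρ t) := by
  rintro (u | ⟨i, j⟩) (v | ⟨i', j'⟩)
  · refine ⟨fun hadj => ?_, fun hnadj => ?_⟩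
    · have hadj' : u ≠ v := hadj
      have hne : ρ u ≠ ρ v := fun e => hadj' (ρ.injective e)
      show ρ u < ρ v ↔ ¬ ρ v < ρ u
      constructor
      · exact fun h1 h2 => absurd (h1.trans h2) (lt_irrefl _)
      · intro h1
        rcases lt_or_gt_of_ne hne with h | h
        · exact h
        · exact absurd h h1
    · have : u = v := by
        by_contra hne; exact hnadj hne
      subst this
      exact fun h => absurd (show ρ u < ρ u from h) (lt_irrefl _)
  · refine ⟨fun hadj => ?_, fun hnadj => ?_⟩
    · have h1 : u.val < i'.val := hadj
      show (u.val < i'.val ∧ rnk ρ i' u < (t i' j' : ℕ)) ↔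
        ¬ (u.val < i'.val ∧ (t i' j' : ℕ) ≤ rnk ρ i' u)
      constructor
      · rintro ⟨_, h2⟩ ⟨_, h3⟩; omega
      · intro h2
        refine ⟨h1, ?_⟩
        by_contra h3
        exact h2 ⟨h1, by omega⟩
    · intro h
      exact hnadj (show u.val < i'.val from h.1)
  · refine ⟨fun hadj => ?_, fun hnadj => ?_⟩
    · have h1 : v.val < i.val := hadj
      show (v.val < i.val ∧ (t i j : ℕ) ≤ rnk ρ i v) ↔
        ¬ (v.val < i.val ∧ rnk ρ i v < (t i j : ℕ))
      constructor
      · rintro ⟨_, h2⟩ ⟨_, h3⟩; omega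
      · intro h2
        refine ⟨h1, ?_⟩
        by_contra h3
        exact h2 ⟨h1, by omega⟩
    · intro h
      exact hnadj (show v.val < i.val from h.1)
  · exact ⟨fun hadj => hadj.elim, fun _ h => h⟩

lemma mkOr_inj (ρ ρ' : Equiv.Perm (Fin k)) (t t' : ∀ i : Fin k, Fin (ns i.val) → Fin (i.val + 1))
    (h : mkOr ρ t = mkOr ρ' t') : ρ = ρ' ∧ t = t' := by
  have key : ∀ u v, ρ u < ρ v ↔ ρ' u < ρ' v := by
    intro u v
    exact iff_of_eq (congrFun (congrFun h (Sum.inl u)) (Sum.inl v))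
  have hρ : ρ = ρ' := by
    let g : Fin k ≃o Fin k :=
      { toEquiv := ρ.symm.trans ρ',
        map_rel_iff' := by
          intro a b
          simp only [Equiv.trans_apply, ← not_lt]
          rw [← key]
          simp }
    have hg : g = OrderIso.refl (Fin k) := Subsingleton.elim _ _
    apply Equiv.ext
    intro u
    have := congrArg (fun e : Fin k ≃o Fin k => e (ρ u)) hg
    simpa [g] using this.symm
  refine ⟨hρ, ?_⟩
  subst hρ
  funext i j
  have hcard : ∀ s : Fin (i.val + 1),
      ((Nbr i).filter (fun u => rnk ρ i u < (s : ℕ))).card = (s : ℕ) :=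
    fun s => card_filter_rnk_lt ρ i (Nat.lt_succ_iff.mp s.isLt)
  have hset : ((Nbr i).filter (fun u => rnk ρ i u < (t i j : ℕ)))
      = ((Nbr i).filter (fun u => rnk ρ i u < (t' i j : ℕ))) := by
    ext u
    simp only [Finset.mem_filter, Nbr, Finset.mem_univ, true_and]
    have := iff_of_eq (congrFun (congrFun h (Sum.inl u)) (Sum.inr ⟨i, j⟩))
    have this' : (u.val < i.val ∧ rnk ρ i u < (t i j : ℕ)) ↔
        (u.val < i.val ∧ rnk ρ i u < (t' i j : ℕ)) := this
    constructor
    · rintro ⟨h1, h2⟩; exact ⟨h1, (this'.mp ⟨h1, h2⟩).2⟩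
    · rintro ⟨h1, h2⟩; exact ⟨h1, (this'.mpr ⟨h1, h2⟩).2⟩
  have : (t i j : ℕ) = (t' i j : ℕ) := by
    rw [← hcard (t i j), ← hcard (t' i j), hset]
  exact Fin.ext this

lemma mkOr_surj (θ : (Fin k ⊕ Σ i : Fin k, Fin (ns i.val)) → (Fin k ⊕ Σ i : Fin k, Fin (ns i.val)) → Prop)
    (hor : IsOrientation (graphH k ns) θ) (hac : RelAcyclic θ) :
    ∃ ρ t, mkOr (ns := ns) ρ t = θ := by
  classical
  have no2 : ∀ a b, θ a b → ¬ θ b a := fun a b h1 h2 =>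
    hac a (Relation.TransGen.tail (Relation.TransGen.single h1) h2)
  have tot : ∀ {a b}, (graphH k ns).Adj a b → θ a b ∨ θ b a := by
    intro a b hadj
    by_cases h : θ b a
    · exact Or.inr h
    · exact Or.inl (((hor a b).1 hadj).mpr h)
  have htrans : ∀ u v w : Fin k, θ (.inl u) (.inl v) → θ (.inl v) (.inl w) → θ (.inl u) (.inl w) := by
    intro u v w h1 h2
    rcases eq_or_ne u w with rfl | hne
    · exact absurd h2 (no2 _ _ h1)
    · rcases tot (show (graphH k ns).Adj (.inl u) (.inl w) from hne) with h | h
      · exact h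
      · exact absurd h (fun h => hac (.inl u)
          (Relation.TransGen.tail (Relation.TransGen.tail (Relation.TransGen.single h1) h2) h))
  have hnself : ∀ u : Fin k, ¬ θ (.inl u) (.inl u) := by
    intro u h
    exact hac _ (Relation.TransGen.single h)
  set pred : Fin k → Finset (Fin k) :=
    fun u => Finset.univ.filter (fun w => θ (.inl w) (.inl u)) with hpred
  have hmono : ∀ u v, θ (.inl u) (.inl v) → (pred u).card < (pred v).card := by
    intro u v h
    apply Finset.card_lt_card
    rw [Finset.ssubset_iff_of_subset]
    · refine ⟨u, ?_, ?_⟩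
      · simp only [hpred, Finset.mem_filter, Finset.mem_univ, true_and]; exact h
      · simp only [hpred, Finset.mem_filter, Finset.mem_univ, true_and]; exact hnself u
    · intro w hw
      simp only [hpred, Finset.mem_filter, Finset.mem_univ, true_and] at hw ⊢
      exact htrans _ _ _ hw h
  have hlt : ∀ u : Fin k, (pred u).card < k := by
    intro u
    have hsub : pred u ⊆ Finset.univ.erase u := by
      intro w hw
      simp only [hpred, Finset.mem_filter, Finset.mem_univ, true_and] at hw
      exact Finset.mem_erase.mpr ⟨fun e => absurd (e ▸ hw) (hnself u), Finset.mem_univ _⟩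
    have h1 := Finset.card_le_card hsub
    rw [Finset.card_erase_of_mem (Finset.mem_univ _), Finset.card_univ, Fintype.card_fin] at h1
    have hk0 : 0 < k := u.pos
    omega
  set ρ0 : Fin k → Fin k := fun u => ⟨(pred u).card, hlt u⟩ with hρ0
  have hρinj : Function.Injective ρ0 := by
    intro u v h
    by_contra hne
    rcases tot (show (graphH k ns).Adj (.inl u) (.inl v) from hne) with h1 | h1
    · exact absurd (congrArg Fin.val h) (Nat.ne_of_lt (hmono _ _ h1))
    · exact absurd (congrArg Fin.val h).symm (Nat.ne_of_lt (hmono _ _ h1))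
  let ρ : Equiv.Perm (Fin k) := Equiv.ofBijective ρ0 (Finite.injective_iff_bijective.mp hρinj)
  have hρcoe : ∀ u, ρ u = ρ0 u := fun u => rfl
  have hρiff : ∀ u v, θ (.inl u) (.inl v) ↔ ρ u < ρ v := by
    intro u v
    constructor
    · intro h
      show (ρ u).val < (ρ v).val
      rw [hρcoe, hρcoe]
      exact hmono u v h
    · intro h
      have hne : u ≠ v := fun e => absurd (e ▸ h) (lt_irrefl _)
      rcases tot (show (graphH k ns).Adj (.inl u) (.inl v) from hne) with h1 | h1
      · exact h1
      · have : ρ v < ρ u := by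
          show (ρ v).val < (ρ u).val
          rw [hρcoe, hρcoe]
          exact hmono v u h1
        exact absurd h (by omega)
  set S : ∀ i : Fin k, Fin (ns i.val) → Finset (Fin k) :=
    fun i j => (Nbr i).filter (fun u => θ (.inl u) (.inr ⟨i, j⟩)) with hS
  have hScard : ∀ i j, (S i j).card ≤ i.val := by
    intro i j
    calc (S i j).card ≤ (Nbr i).card := Finset.card_le_card (Finset.filter_subset _ _)
    _ = i.val := card_Nbr i
  let t : ∀ i : Fin k, Fin (ns i.val) → Fin (i.val + 1) :=
    fun i j => ⟨(S i j).card, Nat.lt_succ_of_le (hScard i j)⟩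
  have ht : ∀ i j, (t i j : ℕ) = (S i j).card := fun i j => rfl
  have hmemS : ∀ (i : Fin k) j (u : Fin k),
      u ∈ S i j ↔ (u.val < i.val ∧ θ (.inl u) (.inr ⟨i, j⟩)) := by
    intro i j u
    simp only [hS, Finset.mem_filter, Nbr, Finset.mem_univ, true_and]
  have hdown : ∀ (i : Fin k) j (u w : Fin k), u ∈ S i j → w.val < i.val → ρ w < ρ u → w ∈ S i j := by
    intro i j u w hu hw hlt'
    rw [hmemS] at hu ⊢
    refine ⟨hw, ?_⟩
    by_contra hns
    have hθw : θ (.inr ⟨i, j⟩) (.inl w) :=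
      ((hor (.inr ⟨i, j⟩) (.inl w)).1 (show (graphH k ns).Adj _ _ from hw)).mpr hns
    have hθwu : θ (.inl w) (.inl u) := (hρiff w u).mpr hlt'
    exact hac (.inl u) (Relation.TransGen.tail
      (Relation.TransGen.tail (Relation.TransGen.single hu.2) hθw) hθwu)
  have hchar : ∀ (i : Fin k) j (u : Fin k),
      θ (.inl u) (.inr ⟨i, j⟩) ↔ (u.val < i.val ∧ rnk ρ i u < (t i j : ℕ)) := by
    intro i j u
    constructor
    · intro h
      have hui : u.val < i.val := by
        by_contra hn
        exact (hor (.inl u) (.inr ⟨i, j⟩)).2 (fun hadj => hn hadj) h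
      refine ⟨hui, ?_⟩
      have huS : u ∈ S i j := (hmemS i j u).mpr ⟨hui, h⟩
      have hsub : (Nbr i).filter (fun w => ρ w < ρ u) ⊆ (S i j).erase u := by
        intro w hw
        simp only [Finset.mem_filter, Nbr, Finset.mem_univ, true_and] at hw
        refine Finset.mem_erase.mpr ⟨fun e => absurd (e ▸ hw.2) (lt_irrefl _), ?_⟩
        exact hdown i j u w huS hw.1 hw.2
      have h1 := Finset.card_le_card hsub
      rw [Finset.card_erase_of_mem huS] at h1
      have h2 : 1 ≤ (S i j).card := Finset.card_pos.mpr ⟨u, huS⟩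
      rw [ht]
      unfold rnk
      omega
    · rintro ⟨hui, hrnk⟩
      by_contra hn
      have hsub : S i j ⊆ (Nbr i).filter (fun w => ρ w < ρ u) := by
        intro w hw
        have hw' := (hmemS i j w).mp hw
        have hwu : w ≠ u := fun e => hn (e ▸ hw'.2)
        have hlt2 : ρ w < ρ u := by
          rcases lt_or_gt_of_ne (fun e : ρ w = ρ u => hwu (ρ.injective e)) with h' | h'
          · exact h'
          · exact absurd ((hmemS i j u).mp (hdown i j w u hw hui h')).2 hn
        simp only [Finset.mem_filter, Nbr, Finset.mem_univ, true_and]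
        exact ⟨hw'.1, hlt2⟩
      have h1 := Finset.card_le_card hsub
      rw [ht] at hrnk
      unfold rnk at hrnk
      omega
  refine ⟨ρ, t, ?_⟩
  funext a b
  rcases a with u | ⟨i, j⟩ <;> rcases b with v | ⟨i', j'⟩
  · exact propext ((hρiff u v).symm)
  · exact propext (hchar i' j' u).symm
  · apply propext
    show (v.val < i.val ∧ (t i j : ℕ) ≤ rnk ρ i v) ↔ θ (.inr ⟨i, j⟩) (.inl v)
    constructor
    · rintro ⟨hvi, hle⟩
      refine ((hor (.inr ⟨i, j⟩) (.inl v)).1 (show (graphH k ns).Adj _ _ from hvi)).mpr ?_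
      intro hvθ
      have := ((hchar i j v).mp hvθ).2
      omega
    · intro hθ'
      have hvi : v.val < i.val := by
        by_contra hn
        exact (hor (.inr ⟨i, j⟩) (.inl v)).2 (fun hadj => hn hadj) hθ'
      refine ⟨hvi, ?_⟩
      by_contra hlt2
      push_neg at hlt2
      exact no2 _ _ hθ' ((hchar i j v).mpr ⟨hvi, hlt2⟩)
  · apply propext
    constructor
    · exact False.elim
    · intro hθ'
      exact (hor (.inr ⟨i, j⟩) (.inr ⟨i', j'⟩)).2 (fun h => h) hθ'

/-- The number of acyclic orientations of `G = H(k, n_0, …, n_{k-1})` is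
`a(G) = k! · Π_{i=0}^{k-1} (i+1)^{n_i}`. -/
theorem numAcyclicOrientations_graphH (k : ℕ) (hk : 1 ≤ k) (ns : ℕ → ℕ) :
    numAcyclicOrientations (graphH k ns)
      = k.factorial * ∏ i ∈ Finset.range k, (i + 1) ^ ns i := by
  classical
  let F : (Equiv.Perm (Fin k) × ∀ i : Fin k, Fin (ns i.val) → Fin (i.val + 1)) →
      {θ : (Fin k ⊕ Σ i : Fin k, Fin (ns i.val)) → (Fin k ⊕ Σ i : Fin k, Fin (ns i.val)) → Prop //
        IsOrientation (graphH k ns) θ ∧ RelAcyclic θ} :=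
    fun p => ⟨mkOr p.1 p.2, mkOr_orient p.1 p.2, mkOr_acyclic p.1 p.2⟩
  have hbij : Function.Bijective F := by
    constructor
    · rintro ⟨ρ, t⟩ ⟨ρ', t'⟩ h
      obtain ⟨h1, h2⟩ := mkOr_inj ρ ρ' t t' (congrArg Subtype.val h)
      simp only [Prod.mk.injEq]
      exact ⟨h1, h2⟩
    · rintro ⟨θ, h1, h2⟩
      obtain ⟨ρ, t, hteq⟩ := mkOr_surj θ h1 h2
      exact ⟨⟨ρ, t⟩, Subtype.ext hteq⟩
  unfold numAcyclicOrientations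
  rw [← Nat.card_congr (Equiv.ofBijective F hbij)]
  rw [Nat.card_eq_fintype_card, Fintype.card_prod, Fintype.card_perm, Fintype.card_fin]
  congr 1
  rw [Fintype.card_pi, ← Fin.prod_univ_eq_prod_range (fun i => (i + 1) ^ ns i) k]
  apply Finset.prod_congr rfl
  intro i _
  rw [Fintype.card_fun, Fintype.card_fin, Fintype.card_fin]
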